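/- arXiv:1309.0949 — 4 statements merged into one kernel-verified Lean document; each statement's English description precedes it below -/
import Mathlib

section
/- For all integers n ≥ 1 and j ≥ 1, the q-Ballot number satisfies, in the field of rational functions ℚ(q): B_j(n,q) = ∑_{r=1}^{n} (−1)^{r−1} T_r^{(j)}(n,q), where T_r^{(j)}(n,q) = q^{r²−r} · [n choose r]_{q²} · [2n+j−1−2r choose n−1]_q · [j]_q / [n]_q. -/
/-- The q-integer `[n]_x = 1 + x + ⋯ + x^{n−1}` in `ℚ(q)` (with `[0]_x = 0`). -/
noncomputable def qInt (x : RatFunc ℚ) (n : ℕ) : RatFunc ℚ := ∑ i ∈ Finset.range n, x ^ i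

/-- The q-factorial `[n]_x! = [1]_x[2]_x⋯[n]_x`. -/
noncomputable def qFact (x : RatFunc ℚ) (n : ℕ) : RatFunc ℚ := ∏ i ∈ Finset.range n, qInt x (i + 1)

/-- The Gaussian binomial coefficient `[m choose k]_x = [m]_x!/([k]_x![m−k]_x!)`
for `0 ≤ k ≤ m`, and `0` if `k > m`. -/
noncomputable def qBinom (x : RatFunc ℚ) (m k : ℕ) : RatFunc ℚ :=
  if k ≤ m then qFact x m / (qFact x k * qFact x (m - k)) else 0

/-- The q-Ballot number `B_j(n,q) = ([j]_q/[2n+j]_q)·[2n+j choose n]_q`. -/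
noncomputable def qBallot (x : RatFunc ℚ) (j n : ℕ) : RatFunc ℚ :=
  (qInt x j / qInt x (2 * n + j)) * qBinom x (2 * n + j) n

open Finset

namespace QK

noncomputable def Phi (y : RatFunc ℚ) (k : ℕ) : RatFunc ℚ := ∏ i ∈ Finset.range k, (y ^ (i+1) - 1)

variable {y : RatFunc ℚ} (hy : ∀ i : ℕ, 1 ≤ i → y ^ i ≠ 1)

include hy

lemma E_ne (i : ℕ) (hi : 1 ≤ i) : y ^ i - 1 ≠ 0 := sub_ne_zero.mpr (hy i hi)

lemma y1_ne : y - 1 ≠ 0 := by simpa using E_ne hy 1 le_rfl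

lemma Phi_ne (k : ℕ) : Phi y k ≠ 0 :=
  Finset.prod_ne_zero_iff.mpr fun i _ => E_ne hy _ (Nat.succ_le_succ (Nat.zero_le i))

lemma qInt_eq (n : ℕ) : qInt y n = (y ^ n - 1) / (y - 1) := by
  rw [eq_div_iff (y1_ne hy), qInt, geom_sum_mul]

lemma qInt_ne (n : ℕ) (hn : 1 ≤ n) : qInt y n ≠ 0 := by
  rw [qInt_eq hy]; exact div_ne_zero (E_ne hy n hn) (y1_ne hy)

lemma qFact_eq (n : ℕ) : qFact y n = Phi y n / (y - 1) ^ n := by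
  simp only [qFact, Phi, qInt_eq hy, Finset.prod_div_distrib, Finset.prod_const, card_range]

lemma qFact_ne (n : ℕ) : qFact y n ≠ 0 := by
  rw [qFact_eq hy]; exact div_ne_zero (Phi_ne hy n) (pow_ne_zero _ (y1_ne hy))

omit hy in
lemma Phi_split (m k : ℕ) (hkm : k ≤ m) :
    Phi y m = Phi y (m-k) * ∏ i ∈ range k, (y ^ (m - k + i + 1) - 1) := by
  conv_lhs => rw [Phi, show m = (m - k) + k by omega, Finset.prod_range_add]
  rfl

lemma qBinom_eq (m k : ℕ) (hkm : k ≤ m) :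
    qBinom y m k = (∏ i ∈ range k, (y ^ (m - k + i + 1) - 1)) / Phi y k := by
  rw [qBinom, if_pos hkm, qFact_eq hy, qFact_eq hy, qFact_eq hy, Phi_split m k hkm]
  have h1 : Phi y k ≠ 0 := Phi_ne hy k
  have h2 : Phi y (m-k) ≠ 0 := Phi_ne hy (m-k)
  have h3 : (y-1) ≠ 0 := y1_ne hy
  have hp : (y-1)^(m-k) * (y-1)^k = (y-1)^m := by rw [← pow_add]; congr 1; omega
  field_simp
  rw [← hp]; ring

lemma qBinom_zero (m : ℕ) : qBinom y m 0 = 1 := by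
  rw [qBinom, if_pos (Nat.zero_le m)]
  have h0 : qFact y 0 = 1 := by simp [qFact]
  rw [h0, Nat.sub_zero, one_mul]; exact div_self (qFact_ne hy m)

lemma qBinom_self (m : ℕ) : qBinom y m m = 1 := by
  rw [qBinom, if_pos le_rfl, Nat.sub_self]
  have : qFact y 0 = 1 := by simp [qFact]
  rw [this, mul_one]; exact div_self (qFact_ne hy m)

omit hy in
lemma qBinom_of_lt {m k : ℕ} (h : m < k) : qBinom y m k = 0 := by
  rw [qBinom, if_neg (by omega)]


lemma qBinom_pascal (m k : ℕ) (hk : k ≤ m) :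
    qBinom y (m+1) (k+1) = qBinom y m (k+1) + y ^ (m-k) * qBinom y m k := by
  rcases eq_or_lt_of_le hk with h | h
  · subst h
    rw [qBinom_of_lt (Nat.lt_succ_self k), qBinom_self hy, qBinom_self hy]
    simp
  · -- k + 1 ≤ m
    have hk1 : k + 1 ≤ m := h
    obtain ⟨d, hd⟩ : ∃ d, m = k + d := ⟨m - k, by omega⟩
    have hd1 : 1 ≤ d := by omega
    subst hd
    have hmk : k + d - k = d := by omega
    rw [qBinom_eq hy (k+d+1) (k+1) (by omega), qBinom_eq hy (k+d) (k+1) (by omega),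
      qBinom_eq hy (k+d) k (by omega), hmk]
    have e1 : (∏ i ∈ range (k+1), (y ^ (k+d+1 - (k+1) + i + 1) - 1))
        = (∏ i ∈ range k, (y ^ (d + i + 1) - 1)) * (y ^ (d+k+1) - 1) := by
      rw [show (∏ i ∈ range (k+1), (y ^ (k+d+1 - (k+1) + i + 1) - 1))
          = ∏ i ∈ range (k+1), (y ^ (d + i + 1) - 1) from
        Finset.prod_congr rfl fun i _ => by congr 2; omega, Finset.prod_range_succ]
      try (congr 3; omega)
    have e2 : (∏ i ∈ range (k+1), (y ^ (k+d - (k+1) + i + 1) - 1))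
        = (∏ i ∈ range k, (y ^ (d + i + 1) - 1)) * (y ^ d - 1) := by
      rw [show (∏ i ∈ range (k+1), (y ^ (k+d - (k+1) + i + 1) - 1))
          = ∏ i ∈ range (k+1), (y ^ (d + i) - 1) from
        Finset.prod_congr rfl fun i _ => by congr 2; omega, Finset.prod_range_succ']
      congr 1
    have e3 : Phi y (k+1) = Phi y k * (y ^ (k+1) - 1) := Finset.prod_range_succ _ _
    rw [e1, e2, e3]
    have h1 : Phi y k ≠ 0 := Phi_ne hy k
    have h2 : y ^ (k+1) - 1 ≠ 0 := E_ne hy _ (by omega)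
    field_simp
    ring

lemma qBinom_absorb (m k : ℕ) (hk : k ≤ m) :
    qBinom y (m+1) (k+1) = (qInt y (m+1) / qInt y (k+1)) * qBinom y m k := by
  obtain ⟨d, hd⟩ : ∃ d, m = k + d := ⟨m - k, by omega⟩
  subst hd
  have hmk : k + d - k = d := by omega
  rw [qBinom_eq hy (k+d+1) (k+1) (by omega), qBinom_eq hy (k+d) k (by omega), hmk,
    qInt_eq hy, qInt_eq hy]
  have e1 : (∏ i ∈ range (k+1), (y ^ (k+d+1 - (k+1) + i + 1) - 1))
      = (∏ i ∈ range k, (y ^ (d + i + 1) - 1)) * (y ^ (k+d+1) - 1) := by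
    rw [show (∏ i ∈ range (k+1), (y ^ (k+d+1 - (k+1) + i + 1) - 1))
        = ∏ i ∈ range (k+1), (y ^ (d + i + 1) - 1) from
      Finset.prod_congr rfl fun i _ => by congr 2; omega, Finset.prod_range_succ]
    congr 3; omega
  have e3 : Phi y (k+1) = Phi y k * (y ^ (k+1) - 1) := Finset.prod_range_succ _ _
  rw [e1, e3]
  have h1 : Phi y k ≠ 0 := Phi_ne hy k
  have h2 : y ^ (k+1) - 1 ≠ 0 := E_ne hy _ (by omega)
  have h3 : y ^ (k+d+1) - 1 ≠ 0 := E_ne hy _ (by omega)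
  have h4 : y - 1 ≠ 0 := y1_ne hy
  field_simp

lemma gauss_sum (n : ℕ) (z : RatFunc ℚ) :
    ∑ r ∈ range (n+1), (-1 : RatFunc ℚ)^r * y^(r.choose 2) * qBinom y n r * z^r
      = ∏ i ∈ range n, (1 - z * y^i) := by
  induction n generalizing z with
  | zero => simp [qBinom_zero hy]
  | succ n ih =>
    rw [Finset.sum_range_succ']
    have step : ∀ i ∈ range (n+1),
        (-1 : RatFunc ℚ)^(i+1) * y^((i+1).choose 2) * qBinom y (n+1) (i+1) * z^(i+1)
        = (-1 : RatFunc ℚ)^(i+1) * y^((i+1).choose 2) * qBinom y n (i+1) * z^(i+1)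
          + (-(z * y^n)) * ((-1 : RatFunc ℚ)^i * y^(i.choose 2) * qBinom y n i * z^i) := by
      intro i hi
      rw [qBinom_pascal hy n i (by simpa using Nat.lt_succ_iff.mp (mem_range.mp hi))]
      have hc : (i+1).choose 2 = i.choose 2 + i := by
        simp [Nat.choose_succ_succ, Nat.choose_one_right, Nat.add_comm]
      have hyy : y^((i+1).choose 2) * y^(n-i) = y^(i.choose 2) * y^n := by
        rw [← pow_add, ← pow_add, hc]
        congr 1
        have := Nat.lt_succ_iff.mp (mem_range.mp hi)
        omega
      have hs : (-1 : RatFunc ℚ)^(i+1) = -(-1)^i := by rw [pow_succ]; ring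
      calc (-1 : RatFunc ℚ)^(i+1) * y^((i+1).choose 2) * (qBinom y n (i+1) + y^(n-i) * qBinom y n i) * z^(i+1)
          = (-1 : RatFunc ℚ)^(i+1) * y^((i+1).choose 2) * qBinom y n (i+1) * z^(i+1)
            + (-1 : RatFunc ℚ)^(i+1) * (y^((i+1).choose 2) * y^(n-i)) * qBinom y n i * z^(i+1) := by ring
        _ = _ := by rw [hyy, hs, pow_succ z]; ring
    rw [Finset.sum_congr rfl step, Finset.sum_add_distrib, ← Finset.mul_sum, ih]
    have last0 : (-1 : RatFunc ℚ)^(n+1) * y^((n+1).choose 2) * qBinom y n (n+1) * z^(n+1) = 0 := by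
      rw [qBinom_of_lt (Nat.lt_succ_self n)]; ring
    have e0 : (-1 : RatFunc ℚ)^0 * y^((0:ℕ).choose 2) * qBinom y (n+1) 0 * z^0 = 1 := by
      simp [qBinom_zero hy]
    rw [e0]
    have resum : (∑ i ∈ range (n+1), (-1 : RatFunc ℚ)^(i+1) * y^((i+1).choose 2) * qBinom y n (i+1) * z^(i+1)) + 1
        = ∑ r ∈ range (n+1), (-1 : RatFunc ℚ)^r * y^(r.choose 2) * qBinom y n r * z^r := by
      have := Finset.sum_range_succ' (fun r => (-1 : RatFunc ℚ)^r * y^(r.choose 2) * qBinom y n r * z^r) (n+1)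
      rw [Finset.sum_range_succ _ (n+1), last0, add_zero] at this
      rw [this]
      simp [qBinom_zero hy]
    rw [add_right_comm, resum, ih, Finset.prod_range_succ]
    ring

lemma vanish (hy0 : y ≠ 0) (n k : ℕ) (hk : k < n) :
    ∑ r ∈ range (n+1), (-1 : RatFunc ℚ)^r * y^(r.choose 2) * qBinom y n r * ((y⁻¹)^k)^r = 0 := by
  rw [gauss_sum hy]
  apply Finset.prod_eq_zero (Finset.mem_range.mpr hk)
  rw [inv_pow, inv_mul_cancel₀ (pow_ne_zero k hy0)]
  ring

omit hy in
lemma hx : ∀ i : ℕ, 1 ≤ i → (RatFunc.X : RatFunc ℚ) ^ i ≠ 1 := by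
  intro i hi h
  have h2 : (algebraMap (Polynomial ℚ) (RatFunc ℚ)) (Polynomial.X ^ i)
      = (algebraMap (Polynomial ℚ) (RatFunc ℚ)) 1 := by
    rw [map_pow, map_one, RatFunc.algebraMap_X, h]
  have h3 := RatFunc.algebraMap_injective ℚ h2
  have h4 := congrArg Polynomial.natDegree h3
  rw [Polynomial.natDegree_X_pow, Polynomial.natDegree_one] at h4
  omega

omit hy in
lemma hx2 : ∀ i : ℕ, 1 ≤ i → ((RatFunc.X : RatFunc ℚ) ^ 2) ^ i ≠ 1 := by
  intro i hi
  rw [← pow_mul]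
  exact hx (2*i) (by omega)

omit hy in
lemma hX0 : (RatFunc.X : RatFunc ℚ) ≠ 0 := RatFunc.X_ne_zero

noncomputable def pp (n j : ℕ) : Polynomial (RatFunc ℚ) :=
  ∏ i ∈ range (n-1), (Polynomial.C ((RatFunc.X : RatFunc ℚ)^(n+j+1+i)) * Polynomial.X - 1)

omit hy in
lemma pp_natDegree (n j : ℕ) (hn : 1 ≤ n) : (pp n j).natDegree < n := by
  have h1 : (pp n j).natDegree ≤ ∑ i ∈ range (n-1), 1 := by
    refine le_trans (Polynomial.natDegree_prod_le _ _) (Finset.sum_le_sum ?_)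
    intro i _
    refine le_trans (Polynomial.natDegree_sub_le _ _) ?_
    simp only [Polynomial.natDegree_one, max_le_iff]
    constructor
    · exact le_trans (Polynomial.natDegree_C_mul_le _ _) (le_of_eq Polynomial.natDegree_X)
    · omega
  simp only [Finset.sum_const, card_range, smul_eq_mul, mul_one] at h1
  omega

omit hy in
lemma pp_eval (n j r : ℕ) (hn : 1 ≤ n) (hj : 1 ≤ j) (hr : r ≤ n) :
    Polynomial.eval ((((RatFunc.X : RatFunc ℚ)^2)⁻¹)^r) (pp n j)
      = qBinom RatFunc.X (2*n+j-1-2*r) (n-1) * Phi RatFunc.X (n-1) := by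
  set x : RatFunc ℚ := RatFunc.X with hxdef
  have heval : Polynomial.eval (((x^2)⁻¹)^r) (pp n j)
      = ∏ i ∈ range (n-1), (x^(n+j+1+i) * ((x^2)⁻¹)^r - 1) := by
    rw [pp, Polynomial.eval_prod]
    exact Finset.prod_congr rfl fun i _ => by simp [hxdef]
  have hinv : ((x^2)⁻¹ : RatFunc ℚ)^r = (x^(2*r))⁻¹ := by
    rw [inv_pow, ← pow_mul]
  by_cases hcase : 2*r ≤ n+j
  · have hkm : n - 1 ≤ 2*n+j-1-2*r := by omega
    rw [qBinom_eq hx _ _ hkm, div_mul_cancel₀ _ (Phi_ne hx (n-1)), heval]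
    refine Finset.prod_congr rfl fun i hi => ?_
    congr 1
    have he : 2*n+j-1-2*r - (n-1) + i + 1 = (n+j+1+i) - 2*r := by omega
    rw [he, pow_sub₀ x hX0 (by omega : 2*r ≤ n+j+1+i), hinv]
  · -- 2*r > n+j : both sides vanish
    push_neg at hcase
    have hn2 : 2 ≤ n := by omega
    have hq0 : qBinom x (2*n+j-1-2*r) (n-1) = 0 := by
      rw [qBinom, if_neg (by omega)]
    rw [hq0, zero_mul, heval]
    refine Finset.prod_eq_zero (Finset.mem_range.mpr (show 2*r-(n+j+1) < n-1 by omega)) ?_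
    rw [hinv]
    have he : n+j+1+(2*r-(n+j+1)) = 2*r := by omega
    rw [he, mul_inv_cancel₀ (pow_ne_zero _ hX0), sub_self]

omit hy in
lemma two_choose_two (r : ℕ) : 2 * r.choose 2 = r^2 - r := by
  induction r with
  | zero => rfl
  | succ r ih =>
    have hc : (r+1).choose 2 = r.choose 2 + r := by
      simp [Nat.choose_succ_succ, Nat.choose_one_right, Nat.add_comm]
    have h1 : (r+1)^2 = r^2 + 2*r + 1 := by ring
    have h2 : r ≤ r^2 := by nlinarith
    omega

omit hy in
lemma ballot_aux (M K j : ℕ) (hK : K ≤ M) :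
    qInt RatFunc.X j / qInt RatFunc.X (M+1) * qBinom RatFunc.X (M+1) (K+1)
      = qInt RatFunc.X j / qInt RatFunc.X (K+1) * qBinom RatFunc.X M K := by
  rw [qBinom_absorb hx M K hK]
  have h1 : qInt RatFunc.X (M+1) ≠ 0 := qInt_ne hx _ (by omega)
  have h2 : qInt RatFunc.X (K+1) ≠ 0 := qInt_ne hx _ (by omega)
  field_simp

omit hy in
lemma ballot_eq (n j : ℕ) (hn : 1 ≤ n) (hj : 1 ≤ j) :
    qBallot RatFunc.X j n
      = (qInt RatFunc.X j / qInt RatFunc.X n) * qBinom RatFunc.X (2*n+j-1) (n-1) := by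
  have key := ballot_aux (2*n+j-1) (n-1) j (by omega)
  simp only [show (2*n+j-1)+1 = 2*n+j by omega, show (n-1)+1 = n by omega] at key
  rw [qBallot, key]

omit hy in
lemma key (n j : ℕ) (hn : 1 ≤ n) (hj : 1 ≤ j) :
    ∑ r ∈ range (n+1), (-1 : RatFunc ℚ)^r *
        (RatFunc.X^(r^2-r) * qBinom (RatFunc.X^2) n r * qBinom RatFunc.X (2*n+j-1-2*r) (n-1)) = 0 := by
  set x : RatFunc ℚ := RatFunc.X with hxdef
  have hΦ : Phi x (n-1) ≠ 0 := Phi_ne hx (n-1)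
  have hQ0 : (x^2 : RatFunc ℚ) ≠ 0 := pow_ne_zero 2 hX0
  have hterm : ∀ r ∈ range (n+1), (-1:RatFunc ℚ)^r * (x^(r^2-r) * qBinom (x^2) n r * qBinom x (2*n+j-1-2*r) (n-1))
      = ((-1:RatFunc ℚ)^r * (x^2)^(r.choose 2) * qBinom (x^2) n r * Polynomial.eval (((x^2)⁻¹)^r) (pp n j)) / Phi x (n-1) := by
    intro r hr
    rw [pp_eval n j r hn hj (Nat.lt_succ_iff.mp (mem_range.mp hr))]
    have hxp : ((x^2)^(r.choose 2) : RatFunc ℚ) = x^(r^2-r) := by rw [← pow_mul, two_choose_two]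
    rw [hxp]
    field_simp
    ring
  rw [Finset.sum_congr rfl hterm, ← Finset.sum_div, div_eq_zero_iff]
  left
  have expand : ∀ r : ℕ, Polynomial.eval (((x^2)⁻¹)^r) (pp n j)
      = ∑ k ∈ range n, (pp n j).coeff k * (((x^2)⁻¹)^k)^r := by
    intro r
    rw [Polynomial.eval_eq_sum_range' (pp_natDegree n j hn)]
    exact Finset.sum_congr rfl fun k _ => by rw [← pow_mul, ← pow_mul, Nat.mul_comm]
  have step1 : ∀ r ∈ range (n+1),
      (-1:RatFunc ℚ)^r * (x^2)^(r.choose 2) * qBinom (x^2) n r * Polynomial.eval (((x^2)⁻¹)^r) (pp n j)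
      = ∑ k ∈ range n, (pp n j).coeff k * ((-1:RatFunc ℚ)^r * (x^2)^(r.choose 2) * qBinom (x^2) n r * (((x^2)⁻¹)^k)^r) := by
    intro r _
    rw [expand r, Finset.mul_sum]
    exact Finset.sum_congr rfl fun k _ => by ring
  rw [Finset.sum_congr rfl step1, Finset.sum_comm]
  refine Finset.sum_eq_zero fun k hk => ?_
  rw [← Finset.mul_sum, vanish hx2 hQ0 n k (mem_range.mp hk), mul_zero]

end QK


/-- For all `n ≥ 1` and `j ≥ 1`, in `ℚ(q)`:
`B_j(n,q) = ∑_{r=1}^{n} (−1)^{r−1} T_r^{(j)}(n,q)` where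
`T_r^{(j)}(n,q) = q^{r²−r}·[n choose r]_{q²}·[2n+j−1−2r choose n−1]_q·[j]_q/[n]_q`. -/
theorem qBallot_q_koshy (n j : ℕ) (hn : 1 ≤ n) (hj : 1 ≤ j) :
    qBallot RatFunc.X j n =
      ∑ r ∈ Finset.Icc 1 n,
        (-1 : RatFunc ℚ) ^ (r - 1) *
          (RatFunc.X ^ (r ^ 2 - r) * qBinom (RatFunc.X ^ 2) n r *
            qBinom RatFunc.X (2 * n + j - 1 - 2 * r) (n - 1) *
            qInt RatFunc.X j / qInt RatFunc.X n) := by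
  have hkey := QK.key n j hn hj
  have hsplit : Finset.range (n+1) = insert 0 (Finset.Icc 1 n) := by
    ext a
    simp only [Finset.mem_range, Finset.mem_insert, Finset.mem_Icc]
    omega
  rw [hsplit, Finset.sum_insert (by simp)] at hkey
  have ht0 : (-1:RatFunc ℚ)^(0:ℕ) * (RatFunc.X^(0^2-0) * qBinom (RatFunc.X^2) n 0 * qBinom RatFunc.X (2*n+j-1-2*0) (n-1))
      = qBinom RatFunc.X (2*n+j-1) (n-1) := by
    norm_num [QK.qBinom_zero QK.hx2]
  rw [ht0] at hkey
  have hB : qBinom RatFunc.X (2*n+j-1) (n-1)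
      = ∑ r ∈ Finset.Icc 1 n, (-1:RatFunc ℚ)^(r-1) *
          (RatFunc.X^(r^2-r) * qBinom (RatFunc.X^2) n r * qBinom RatFunc.X (2*n+j-1-2*r) (n-1)) := by
    rw [eq_neg_of_add_eq_zero_left hkey, ← Finset.sum_neg_distrib]
    refine Finset.sum_congr rfl fun r hr => ?_
    have hr1 : 1 ≤ r := (Finset.mem_Icc.mp hr).1
    obtain ⟨s, rfl⟩ : ∃ s, r = s+1 := ⟨r-1, by omega⟩
    have : (-1:RatFunc ℚ)^(s+1) = -(-1:RatFunc ℚ)^(s+1-1) := by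
      simp [pow_succ]
    rw [this]
    ring
  rw [QK.ballot_eq n j hn hj, hB, Finset.mul_sum]
  exact Finset.sum_congr rfl fun r hr => by ring
end

section
/- For all integers n ≥ 1 and j ≥ 1, the following identity holds in ℤ[q]: ∑_{r=0}^{n} (−1)^r · q^{r²−r} · [n choose r]_{q²} · [2n+j−2r−1 choose n−1]_q = 0; equivalently, [2n+j−1 choose n−1]_q = ∑_{r=1}^{n} (−1)^{r−1} · q^{r²−r} · [n choose r]_{q²} · [2n+j−2r−1 choose n−1]_q. -/
open Polynomial

/-- The q-integer `[n]_q = 1 + q + ⋯ + q^{n−1}` as a polynomial in `ℤ[q]`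
(with `[0]_q = 0`). -/
noncomputable def qIntP (n : ℕ) : Polynomial ℤ := ∑ i ∈ Finset.range n, Polynomial.X ^ i

/-- The q-factorial `[n]_q! = [1]_q[2]_q⋯[n]_q` in `ℤ[q]`. -/
noncomputable def qFactP (n : ℕ) : Polynomial ℤ := ∏ i ∈ Finset.range n, qIntP (i + 1)

/-- The Gaussian binomial coefficient `[m choose k]_q = [m]_q!/([k]_q![m−k]_q!)`
as a polynomial in `ℤ[q]` (the division, by a monic polynomial, is exact),
and `0` if `k > m`. -/
noncomputable def qBinomP (m k : ℕ) : Polynomial ℤ :=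
  if k ≤ m then qFactP m /ₘ (qFactP k * qFactP (m - k)) else 0

/-- The Gaussian binomial coefficient `[m choose k]_{q²}`, i.e. `[m choose k]_q`
with `q` replaced by `q²`. -/
noncomputable def qBinomP2 (m k : ℕ) : Polynomial ℤ := (qBinomP m k).comp (Polynomial.X ^ 2)

noncomputable def gb : ℕ → ℕ → Polynomial ℤ
  | _, 0 => 1
  | 0, _+1 => 0
  | m+1, k+1 => gb m k + X^(k+1) * gb m (k+1)

@[simp] lemma gb_zero (m : ℕ) : gb m 0 = 1 := by cases m <;> rfl
@[simp] lemma gb_zero_left (k : ℕ) : gb 0 (k+1) = 0 := rfl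
lemma gb_succ (m k : ℕ) : gb (m+1) (k+1) = gb m k + X^(k+1) * gb m (k+1) := rfl

lemma gb_eq_zero : ∀ {m k : ℕ}, m < k → gb m k = 0 := by
  intro m
  induction m with
  | zero => intro k h; cases k with | zero => omega | succ k => rfl
  | succ m ih =>
    intro k h
    cases k with
    | zero => omega
    | succ k => rw [gb_succ, ih (by omega), ih (by omega), mul_zero, add_zero]

@[simp] lemma gb_self : ∀ m, gb m m = 1 := by
  intro m
  induction m with
  | zero => rfl
  | succ m ih => rw [gb_succ, ih, gb_eq_zero (by omega), mul_zero, add_zero]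

lemma gb_one (m : ℕ) : gb m 1 = qIntP m := by
  induction m with
  | zero => simp [qIntP]
  | succ m ih =>
    rw [gb_succ, gb_zero, ih, qIntP, qIntP, geom_sum_succ, pow_one]
    ring

lemma gb_pascal2 : ∀ m k, k ≤ m → gb (m+1) (k+1) = X^(m-k) * gb m k + gb m (k+1) := by
  intro m
  induction m with
  | zero => intro k hk; interval_cases k; simp [gb_succ]
  | succ m ih =>
    intro k hk
    cases k with
    | zero =>
      have h0 : (0:ℕ)+1 = 1 := rfl
      rw [h0, gb_one, gb_one, gb_zero, mul_one, Nat.sub_zero, qIntP, qIntP,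
        Finset.sum_range_succ]
      ring
    | succ k =>
      by_cases hkm : k + 1 ≤ m
      · have e1 : gb (m+1) (k+1) = X^(m-k) * gb m k + gb m (k+1) := ih k (by omega)
        have e2 : gb (m+1) (k+1+1) = X^(m-(k+1)) * gb m (k+1) + gb m (k+1+1) := ih (k+1) hkm
        have e4 : gb (m+1) (k+1) = gb m k + X^(k+1) * gb m (k+1) := gb_succ _ _
        have e5 : gb (m+1) (k+1+1) = gb m (k+1) + X^(k+1+1) * gb m (k+1+1) := gb_succ _ _
        have hx : (X:Polynomial ℤ)^(k+1+1) * X^(m-(k+1)) = X^(m-k) * X^(k+1) := by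
          rw [← pow_add, ← pow_add]; congr 1; omega
        have h1 : (m+1) - (k+1) = m - k := by omega
        rw [gb_succ, h1]
        conv_lhs => rw [e1, e2]
        conv_rhs => rw [e4, e5]
        linear_combination gb m (k+1) * hx
      · obtain rfl : k = m := by omega
        rw [gb_self, gb_self, gb_eq_zero (by omega), Nat.sub_self, pow_zero]
        ring

lemma qIntP_add (a b : ℕ) : qIntP (a + b) = qIntP a + X^a * qIntP b := by
  simp only [qIntP, Finset.sum_range_add, Finset.mul_sum, pow_add]

lemma qFactP_succ (m : ℕ) : qFactP (m + 1) = qFactP m * qIntP (m + 1) :=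
  Finset.prod_range_succ _ _

lemma gb_key : ∀ m k, k ≤ m → qFactP k * qFactP (m - k) * gb m k = qFactP m := by
  intro m
  induction m with
  | zero => intro k hk; interval_cases k; simp [qFactP]
  | succ m ih =>
    intro k hk
    cases k with
    | zero => simp [qFactP]
    | succ k =>
      by_cases hkm : k + 1 ≤ m + 1 ∧ k + 1 ≠ m + 1
      · have hk1 : k + 1 ≤ m := by omega
        have h1 : m + 1 - (k + 1) = (m - (k+1)) + 1 := by omega
        have h2 : m - k = (m - (k+1)) + 1 := by omega
        have e1 := ih k (by omega)
        have e2 := ih (k+1) hk1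
        rw [gb_succ, h1]
        have key : qIntP (k+1) + X^(k+1) * qIntP (m - k) = qIntP (m+1) := by
          rw [← qIntP_add]; congr 1; omega
        calc qFactP (k+1) * qFactP (m - (k+1) + 1) * (gb m k + X^(k+1) * gb m (k+1))
            = qIntP (k+1) * (qFactP k * qFactP (m - k) * gb m k)
              + X^(k+1) * qIntP (m - (k+1) + 1) *
                (qFactP (k+1) * qFactP (m - (k+1)) * gb m (k+1)) := by
              rw [qFactP_succ k, qFactP_succ (m - (k+1)), h2, qFactP_succ (m - (k+1))]
              ring
          _ = qIntP (k+1) * qFactP m + X^(k+1) * qIntP (m - k) * qFactP m := by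
              rw [e1, e2, h2]
          _ = qFactP (m+1) := by rw [qFactP_succ m, ← key]; ring
      · obtain rfl : k = m := by omega
        rw [gb_self, Nat.sub_self, mul_one]
        simp [qFactP]


lemma qIntP_monic (n : ℕ) : (qIntP (n + 1)).Monic := by
  induction n with
  | zero => simpa [qIntP] using monic_one
  | succ n ih =>
    have : qIntP (n + 1 + 1) = X ^ (n + 1) + qIntP (n + 1) := by
      rw [qIntP, qIntP, Finset.sum_range_succ]; ring
    rw [this]
    apply monic_X_pow_add
    calc (qIntP (n+1)).degree ≤ (n : WithBot ℕ) := by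
          rw [qIntP]
          refine (Polynomial.degree_sum_le _ _).trans ?_
          rw [Finset.sup_le_iff]
          intro i hi
          refine (degree_X_pow_le i).trans ?_
          exact_mod_cast Nat.lt_succ_iff.mp (Finset.mem_range.mp hi)
      _ < ((n+1 : ℕ) : WithBot ℕ) := by exact_mod_cast Nat.lt_succ_self n

lemma qFactP_monic (n : ℕ) : (qFactP n).Monic :=
  monic_prod_of_monic _ _ fun i _ => qIntP_monic i

lemma qBinomP_eq_gb (m k : ℕ) : qBinomP m k = gb m k := by
  by_cases h : k ≤ m
  · rw [qBinomP, if_pos h, ← gb_key m k h,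
      mul_divByMonic_cancel_left _ ((qFactP_monic k).mul (qFactP_monic (m - k)))]
  · rw [qBinomP, if_neg h, gb_eq_zero (by omega)]

noncomputable def gb2 (m k : ℕ) : Polynomial ℤ := (gb m k).comp (X ^ 2)

@[simp] lemma gb2_zero (m : ℕ) : gb2 m 0 = 1 := by simp [gb2]
lemma gb2_eq_zero {m k : ℕ} (h : m < k) : gb2 m k = 0 := by simp [gb2, gb_eq_zero h]

lemma gb2_pascal2 {m k : ℕ} (h : k ≤ m) :
    gb2 (m+1) (k+1) = X^(2*(m-k)) * gb2 m k + gb2 m (k+1) := by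
  unfold gb2
  rw [gb_pascal2 m k h]
  simp [add_comp, mul_comp, X_pow_comp, ← pow_mul, mul_comm]

lemma cstep (n k : ℕ) (h : k ≤ n) :
    (-1 : Polynomial ℤ)^(k+1) * X^((k+1)^2-(k+1)) * gb2 (n+1) (k+1)
      = (-1)^(k+1) * X^((k+1)^2-(k+1)) * gb2 n (k+1)
        - X^(2*n) * ((-1)^k * X^(k^2-k) * gb2 n k) := by
  have h2 : k ≤ k^2 := Nat.le_self_pow two_ne_zero k
  have hsq : (k+1)^2 = k^2 + 2*k + 1 := by ring
  have he1 : (k+1)^2 - (k+1) = k^2 + k := by omega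
  have he2 : k^2 + k + 2*(n-k) = 2*n + (k^2-k) := by omega
  rw [gb2_pascal2 h, he1]
  have hx : (X : Polynomial ℤ)^(k^2+k) * X^(2*(n-k)) = X^(2*n) * X^(k^2-k) := by
    rw [← pow_add, ← pow_add, he2]
  rw [pow_succ]
  ring_nf
  ring_nf at hx
  linear_combination (-((-1:Polynomial ℤ)^k)) * gb2 n k * hx

lemma stepA : ∀ n : ℕ,
    ∏ i ∈ Finset.range n, (1 - Polynomial.C ((X:Polynomial ℤ)^(2*i)) * X^2) =
      ∑ k ∈ Finset.range (n+1),
        Polynomial.C ((-1:Polynomial ℤ)^k * X^(k^2-k) * gb2 n k) *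
          (X : Polynomial (Polynomial ℤ))^(2*k) := by
  intro n
  induction n with
  | zero => simp
  | succ n ih =>
    rw [Finset.prod_range_succ, ih]
    have hzero : (-1:Polynomial ℤ)^(n+1) * X^((n+1)^2-(n+1)) * gb2 n (n+1) = 0 := by
      rw [gb2_eq_zero (by omega), mul_zero]
    -- extend LHS sum to range (n+2)
    have hL : ∑ k ∈ Finset.range (n+1),
        Polynomial.C ((-1:Polynomial ℤ)^k * X^(k^2-k) * gb2 n k) *
          (X : Polynomial (Polynomial ℤ))^(2*k)
        = ∑ k ∈ Finset.range (n+2),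
        Polynomial.C ((-1:Polynomial ℤ)^k * X^(k^2-k) * gb2 n k) *
          (X : Polynomial (Polynomial ℤ))^(2*k) := by
      rw [Finset.sum_range_succ _ (n+1), hzero, map_zero, zero_mul, add_zero]
    rw [mul_sub, mul_one, Finset.sum_mul, hL]
    rw [Finset.sum_range_succ' (fun k => Polynomial.C ((-1:Polynomial ℤ)^k * X^(k^2-k) * gb2 n k) *
          (X : Polynomial (Polynomial ℤ))^(2*k)) (n+1)]
    rw [Finset.sum_range_succ' (fun k => Polynomial.C ((-1:Polynomial ℤ)^k * X^(k^2-k) * gb2 (n+1) k) *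
          (X : Polynomial (Polynomial ℤ))^(2*k)) (n+1)]
    simp only [pow_zero, mul_one, Nat.sub_zero, mul_zero, gb2_zero, one_mul, map_one]
    rw [add_sub_right_comm, ← Finset.sum_sub_distrib]
    congr 1
    apply Finset.sum_congr rfl
    intro k hk
    have hc := cstep n k (Nat.lt_succ_iff.mp (Finset.mem_range.mp hk))
    rw [hc]
    simp only [map_sub, map_mul]
    ring

lemma stepCsub (N k : ℕ) :
    (1 - Polynomial.C ((X:Polynomial ℤ)^(k+1)) * X) *
      (∑ M ∈ Finset.range (N+1), Polynomial.C (gb (M+(k+1)) (k+1)) * X^M)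
    = (∑ M ∈ Finset.range (N+1), Polynomial.C (gb (M+k) k) * X^M)
      - Polynomial.C ((X:Polynomial ℤ)^(k+1) * gb (N+1+k) (k+1)) * X^(N+1) := by
  set f : ℕ → Polynomial (Polynomial ℤ) :=
    fun M => Polynomial.C ((X:Polynomial ℤ)^(k+1) * gb (M+k) (k+1)) * X^M with hf
  have hS1 : ∑ M ∈ Finset.range (N+1), Polynomial.C (gb (M+(k+1)) (k+1)) * X^M
      = (∑ M ∈ Finset.range (N+1), Polynomial.C (gb (M+k) k) * X^M)
        + ∑ M ∈ Finset.range (N+1), f M := by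
    rw [← Finset.sum_add_distrib]
    apply Finset.sum_congr rfl
    intro M _
    have h : M + (k+1) = (M+k)+1 := by omega
    rw [h, gb_succ, map_add, add_mul, hf]
  have hS2 : Polynomial.C ((X:Polynomial ℤ)^(k+1)) * X *
      (∑ M ∈ Finset.range (N+1), Polynomial.C (gb (M+(k+1)) (k+1)) * X^M)
      = ∑ M ∈ Finset.range (N+1), f (M+1) := by
    rw [Finset.mul_sum]
    apply Finset.sum_congr rfl
    intro M _
    have h : M + (k+1) = (M+1)+k := by omega
    rw [hf, h]
    simp only [map_mul, pow_succ]
    ring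
  have htel : (∑ M ∈ Finset.range (N+1), f M) - (∑ M ∈ Finset.range (N+1), f (M+1))
      = f 0 - f (N+1) := by
    rw [Finset.sum_range_succ' f N, Finset.sum_range_succ (fun M => f (M+1)) N]
    ring
  have hf0 : f 0 = 0 := by
    rw [hf]; simp [gb_eq_zero (show k < k+1 by omega)]
  rw [sub_mul, one_mul, hS2, hS1]
  rw [hf] at htel hf0 ⊢
  simp only at htel hf0 ⊢
  rw [show N + 1 + k = N + (1 + k) by omega] at *
  linear_combination htel + hf0

lemma stepC (N : ℕ) : ∀ k : ℕ, ∃ E : Polynomial (Polynomial ℤ),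
    (∏ i ∈ Finset.range (k+1), (1 - Polynomial.C ((X:Polynomial ℤ)^i) * X)) *
      (∑ M ∈ Finset.range (N+1), Polynomial.C (gb (M+k) k) * X^M) = 1 - X^(N+1) * E := by
  intro k
  induction k with
  | zero =>
    refine ⟨1, ?_⟩
    have h1 : ∀ M ∈ Finset.range (N+1),
        Polynomial.C (gb (M+0) 0) * (X:Polynomial (Polynomial ℤ))^M = X^M := by
      intro M _; simp
    rw [Finset.sum_congr rfl h1, Finset.prod_range_one]
    simp only [pow_zero, map_one, one_mul, mul_one]
    have hg := geom_sum_mul (X : Polynomial (Polynomial ℤ)) (N+1)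
    linear_combination -hg
  | succ k ih =>
    obtain ⟨E, hE⟩ := ih
    refine ⟨E + Polynomial.C ((X:Polynomial ℤ)^(k+1) * gb (N+1+k) (k+1)) *
      (∏ i ∈ Finset.range (k+1), (1 - Polynomial.C ((X:Polynomial ℤ)^i) * X)), ?_⟩
    rw [Finset.prod_range_succ]
    have hsub := stepCsub N k
    calc (∏ i ∈ Finset.range (k+1), (1 - Polynomial.C ((X:Polynomial ℤ)^i) * X)) *
          (1 - Polynomial.C ((X:Polynomial ℤ)^(k+1)) * X) *
          (∑ M ∈ Finset.range (N+1), Polynomial.C (gb (M+(k+1)) (k+1)) * X^M)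
        = (∏ i ∈ Finset.range (k+1), (1 - Polynomial.C ((X:Polynomial ℤ)^i) * X)) *
          ((1 - Polynomial.C ((X:Polynomial ℤ)^(k+1)) * X) *
            (∑ M ∈ Finset.range (N+1), Polynomial.C (gb (M+(k+1)) (k+1)) * X^M)) := by
          ring
      _ = (∏ i ∈ Finset.range (k+1), (1 - Polynomial.C ((X:Polynomial ℤ)^i) * X)) *
          ((∑ M ∈ Finset.range (N+1), Polynomial.C (gb (M+k) k) * X^M)
            - Polynomial.C ((X:Polynomial ℤ)^(k+1) * gb (N+1+k) (k+1)) * X^(N+1)) := by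
          rw [hsub]
      _ = 1 - X^(N+1) * (E + Polynomial.C ((X:Polynomial ℤ)^(k+1) * gb (N+1+k) (k+1)) *
          (∏ i ∈ Finset.range (k+1), (1 - Polynomial.C ((X:Polynomial ℤ)^i) * X))) := by
          rw [mul_sub, hE]
          ring

lemma qBinomP2_eq_gb2 (m k : ℕ) : qBinomP2 m k = gb2 m k := by
  rw [qBinomP2, qBinomP_eq_gb]; rfl

lemma stepB (n : ℕ) :
    ∏ i ∈ Finset.range n, (1 - Polynomial.C ((X:Polynomial ℤ)^(2*i)) * X^2)
    = (∏ i ∈ Finset.range n, (1 + Polynomial.C ((X:Polynomial ℤ)^i) * X)) *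
      (∏ i ∈ Finset.range n, (1 - Polynomial.C ((X:Polynomial ℤ)^i) * X)) := by
  rw [← Finset.prod_mul_distrib]
  apply Finset.prod_congr rfl
  intro i _
  have h : Polynomial.C ((X:Polynomial ℤ)^(2*i)) =
      Polynomial.C ((X:Polynomial ℤ)^i) * Polynomial.C ((X:Polynomial ℤ)^i) := by
    rw [← map_mul, ← pow_add, two_mul]
  rw [h]; ring

/-- For all `n ≥ 1` and `j ≥ 1`, in `ℤ[q]`:
`∑_{r=0}^{n} (−1)^r·q^{r²−r}·[n choose r]_{q²}·[2n+j−2r−1 choose n−1]_q = 0`;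
equivalently `[2n+j−1 choose n−1]_q
 = ∑_{r=1}^{n} (−1)^{r−1}·q^{r²−r}·[n choose r]_{q²}·[2n+j−2r−1 choose n−1]_q`. -/
theorem qBallot_sieve_identity (n j : ℕ) (hn : 1 ≤ n) (hj : 1 ≤ j) :
    (∑ r ∈ Finset.range (n + 1),
        (-1 : Polynomial ℤ) ^ r * Polynomial.X ^ (r ^ 2 - r) *
          qBinomP2 n r * qBinomP (2 * n + j - 2 * r - 1) (n - 1) = 0) ∧
    qBinomP (2 * n + j - 1) (n - 1) =
      ∑ r ∈ Finset.Icc 1 n,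
        (-1 : Polynomial ℤ) ^ (r - 1) * Polynomial.X ^ (r ^ 2 - r) *
          qBinomP2 n r * qBinomP (2 * n + j - 2 * r - 1) (n - 1) := by
  set c : ℕ → Polynomial ℤ := fun r => (-1)^r * X^(r^2-r) * gb2 n r with hc
  set b : ℕ → Polynomial ℤ := fun M => gb (M+(n-1)) (n-1) with hb
  set N : ℕ := n + j with hN
  obtain ⟨E, hE⟩ := stepC N (n-1)
  rw [show n - 1 + 1 = n by omega] at hE
  set Pplus : Polynomial (Polynomial ℤ) :=
    ∏ i ∈ Finset.range n, (1 + Polynomial.C ((X:Polynomial ℤ)^i) * X) with hP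
  set G : Polynomial (Polynomial ℤ) :=
    ∑ M ∈ Finset.range (N+1), Polynomial.C (b M) * X^M with hG
  set Ssum : Polynomial (Polynomial ℤ) :=
    ∑ r ∈ Finset.range (n+1), Polynomial.C (c r) * X^(2*r) with hS
  have hmaster : Ssum * G = Pplus * (1 - X^(N+1) * E) := by
    rw [hS, hG, hb, hc]
    rw [← stepA n, stepB n, mul_assoc, hE]
  -- right side coefficient is zero
  have hdeg : Pplus.natDegree ≤ n := by
    refine (Polynomial.natDegree_prod_le _ _).trans ?_
    have : ∀ i ∈ Finset.range n,
        (1 + Polynomial.C ((X:Polynomial ℤ)^i) * X).natDegree ≤ 1 := by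
      intro i _
      refine (Polynomial.natDegree_add_le _ _).trans ?_
      simp only [Polynomial.natDegree_one, max_le_iff]
      exact ⟨by omega, (Polynomial.natDegree_C_mul_le _ _).trans Polynomial.natDegree_X_le⟩
    refine (Finset.sum_le_sum this).trans ?_
    simp
  have hR : (Pplus * (1 - X^(N+1) * E)).coeff (n+j) = 0 := by
    rw [mul_sub, mul_one, show Pplus * (X^(N+1) * E) = (Pplus * E) * X^(N+1) by ring,
      Polynomial.coeff_sub, Polynomial.coeff_mul_X_pow',
      if_neg (by omega : ¬ (N+1 ≤ n+j)),
      Polynomial.coeff_eq_zero_of_natDegree_lt (lt_of_le_of_lt hdeg (by omega)), sub_zero]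
  -- left side coefficient
  have hinner : ∀ r ∈ Finset.range (n+1),
      (Polynomial.C (c r) * X^(2*r) * G).coeff (n+j)
      = if 2*r ≤ n+j then c r * b (n+j-2*r) else 0 := by
    intro r hr
    rw [hG, Finset.mul_sum, Polynomial.finset_sum_coeff]
    have hterm : ∀ M ∈ Finset.range (N+1),
        (Polynomial.C (c r) * X^(2*r) * (Polynomial.C (b M) * X^M)).coeff (n+j)
        = if n+j = 2*r+M then c r * b M else 0 := by
      intro M _
      rw [mul_mul_mul_comm, ← map_mul, ← pow_add, Polynomial.coeff_C_mul,
        Polynomial.coeff_X_pow]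
      simp only [mul_ite, mul_one, mul_zero]
    rw [Finset.sum_congr rfl hterm]
    by_cases h2 : 2*r ≤ n+j
    · rw [if_pos h2, Finset.sum_eq_single (n+j-2*r)]
      · rw [if_pos (by omega)]
      · intro M _ hne; rw [if_neg (by omega)]
      · intro habs; exact absurd (Finset.mem_range.mpr (by omega)) habs
    · rw [if_neg h2, Finset.sum_eq_zero]
      intro M _; rw [if_neg (by omega)]
  have hLR : ∑ r ∈ Finset.range (n+1), (if 2*r ≤ n+j then c r * b (n+j-2*r) else 0) = 0 := by
    calc ∑ r ∈ Finset.range (n+1), (if 2*r ≤ n+j then c r * b (n+j-2*r) else 0)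
        = ∑ r ∈ Finset.range (n+1), (Polynomial.C (c r) * X^(2*r) * G).coeff (n+j) := by
          exact (Finset.sum_congr rfl hinner).symm
      _ = (Ssum * G).coeff (n+j) := by
          rw [hS, Finset.sum_mul, Polynomial.finset_sum_coeff]
      _ = 0 := by rw [hmaster, hR]
  -- convert to the stated sum
  have hmatch : ∀ r ∈ Finset.range (n+1),
      (-1 : Polynomial ℤ) ^ r * Polynomial.X ^ (r ^ 2 - r) *
          qBinomP2 n r * qBinomP (2 * n + j - 2 * r - 1) (n - 1)
      = (if 2*r ≤ n+j then c r * b (n+j-2*r) else 0) := by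
    intro r hr
    have hrn : r ≤ n := by have := Finset.mem_range.mp hr; omega
    rw [qBinomP2_eq_gb2]
    by_cases h2 : 2*r ≤ n+j
    · rw [if_pos h2, hc, hb]
      simp only []
      rw [qBinomP_eq_gb, show 2*n+j-2*r-1 = (n+j-2*r) + (n-1) by omega]
    · rw [if_neg h2]
      rw [qBinomP, if_neg (by omega)]
      ring
  have first : ∑ r ∈ Finset.range (n + 1),
      (-1 : Polynomial ℤ) ^ r * Polynomial.X ^ (r ^ 2 - r) *
        qBinomP2 n r * qBinomP (2 * n + j - 2 * r - 1) (n - 1) = 0 := by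
    rw [Finset.sum_congr rfl hmatch]; exact hLR
  refine ⟨first, ?_⟩
  -- second statement
  set t : ℕ → Polynomial ℤ := fun r => (-1 : Polynomial ℤ) ^ r * Polynomial.X ^ (r ^ 2 - r) *
        qBinomP2 n r * qBinomP (2 * n + j - 2 * r - 1) (n - 1) with ht
  have hsplit : ∑ i ∈ Finset.range n, t (i+1) + t 0 = 0 := by
    rw [← Finset.sum_range_succ' t n]; exact first
  have ht0 : t 0 = qBinomP (2 * n + j - 1) (n - 1) := by
    have h00 : (0:ℕ)^2 - 0 = 0 := by norm_num
    have h01 : 2*n+j-2*0-1 = 2*n+j-1 := by omega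
    rw [ht]
    simp only [h00, h01, pow_zero, one_mul, qBinomP2_eq_gb2, gb2_zero]
  rw [show Finset.Icc 1 n = Finset.Ico 1 (n+1) by rw [Finset.Ico_add_one_right_eq_Icc],
    Finset.sum_Ico_eq_sum_range, show n+1-1 = n by omega]
  have hpt : ∀ i ∈ Finset.range n,
      (-1 : Polynomial ℤ) ^ (1+i-1) * Polynomial.X ^ ((1+i) ^ 2 - (1+i)) *
        qBinomP2 n (1+i) * qBinomP (2 * n + j - 2 * (1+i) - 1) (n - 1) = - t (i+1) := by
    intro i _
    rw [ht, show 1+i = i+1 by omega, show i+1-1 = i by omega]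
    simp only []
    rw [pow_succ]
    ring
  rw [Finset.sum_congr rfl hpt, ← ht0]
  rw [Finset.sum_neg_distrib]
  linear_combination hsplit
end

section
/- For all integers r ≥ 1, j ≥ 1 and n with n ≥ 2r−j and 1 ≤ r ≤ n, the q-integer [n]_q divides the product [j]_q · [n choose r]_{q²} · [2n+j−1−2r choose n−1]_q in the polynomial ring ℤ[q]. (Equivalently, T_r^{(j)}(n,q) = q^{r²−r}·[n choose r]_{q²}·[2n+j−1−2r choose n−1]_q·[j]_q/[n]_q is a polynomial for n ≥ 2r−j.) -/
open Polynomial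

namespace QTrjAux

lemma qIntP_eq_prod {n : ℕ} (hn : 0 < n) :
    qIntP n = ∏ i ∈ n.divisors.erase 1, cyclotomic i ℤ := by
  rw [qIntP, prod_cyclotomic_eq_geom_sum hn ℤ]

lemma qFactP_eq_prod (m : ℕ) :
    qFactP m = ∏ d ∈ Finset.Icc 2 m, cyclotomic d ℤ ^ (m / d) := by
  rw [qFactP]
  have h1 : ∀ i ∈ Finset.range m,
      qIntP (i + 1) = ∏ d ∈ Finset.Icc 2 m, (if d ∣ i + 1 then cyclotomic d ℤ else 1) := by
    intro i hi
    have him : i + 1 ≤ m := Finset.mem_range.mp hi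
    have hset : (Finset.Icc 2 m).filter (· ∣ i + 1) = (i + 1).divisors.erase 1 := by
      ext d
      simp only [Finset.mem_filter, Finset.mem_Icc, Finset.mem_erase, Nat.mem_divisors]
      constructor
      · rintro ⟨⟨h2, _⟩, hdvd⟩
        exact ⟨by omega, hdvd, by omega⟩
      · rintro ⟨h1', hdvd, -⟩
        have hd1 : d ≤ i + 1 := Nat.le_of_dvd (Nat.succ_pos i) hdvd
        have hd0 : d ≠ 0 := by
          rintro rfl
          exact absurd (Nat.eq_zero_of_zero_dvd hdvd) (by omega)
        exact ⟨⟨by omega, by omega⟩, hdvd⟩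
    rw [qIntP_eq_prod (Nat.succ_pos i), ← hset, Finset.prod_filter]
  calc (∏ i ∈ Finset.range m, qIntP (i + 1))
      = ∏ i ∈ Finset.range m, ∏ d ∈ Finset.Icc 2 m,
          (if d ∣ i + 1 then cyclotomic d ℤ else 1) := Finset.prod_congr rfl h1
    _ = ∏ d ∈ Finset.Icc 2 m, ∏ i ∈ Finset.range m,
          (if d ∣ i + 1 then cyclotomic d ℤ else 1) := Finset.prod_comm
    _ = ∏ d ∈ Finset.Icc 2 m, cyclotomic d ℤ ^ (m / d) := by
        refine Finset.prod_congr rfl fun d _ => ?_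
        rw [← Finset.prod_filter, Finset.prod_const, Nat.card_multiples]

lemma qFactP_monic (m : ℕ) : (qFactP m).Monic := by
  rw [qFactP_eq_prod]
  exact monic_prod_of_monic _ _ fun d _ => (cyclotomic.monic d ℤ).pow _

lemma qFactP_eq_prod' {k m : ℕ} (hk : k ≤ m) :
    qFactP k = ∏ d ∈ Finset.Icc 2 m, cyclotomic d ℤ ^ (k / d) := by
  rw [qFactP_eq_prod]
  apply Finset.prod_subset (Finset.Icc_subset_Icc_right hk)
  intro d hd hnd
  simp only [Finset.mem_Icc] at hd hnd
  have : k < d := by omega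
  rw [Nat.div_eq_of_lt this, pow_zero]

lemma denom_eq {k m : ℕ} (hk : k ≤ m) :
    qFactP k * qFactP (m - k)
      = ∏ d ∈ Finset.Icc 2 m, cyclotomic d ℤ ^ (k / d + (m - k) / d) := by
  rw [qFactP_eq_prod' hk, qFactP_eq_prod' (Nat.sub_le m k), ← Finset.prod_mul_distrib]
  exact Finset.prod_congr rfl fun d _ => (pow_add _ _ _).symm

lemma div_add_div_le {a b e : ℕ} : a / e + b / e ≤ (a + b) / e := by
  rcases Nat.eq_zero_or_pos e with rfl | he
  · simp
  rw [Nat.le_div_iff_mul_le he, add_mul]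
  exact Nat.add_le_add (Nat.div_mul_le_self a e) (Nat.div_mul_le_self b e) |>.trans_eq rfl
    |>.trans (by exact Nat.le_refl _) |>.trans (le_refl _)

lemma denom_dvd {k m : ℕ} (hk : k ≤ m) : qFactP k * qFactP (m - k) ∣ qFactP m := by
  rw [denom_eq hk, qFactP_eq_prod]
  refine Finset.prod_dvd_prod_of_dvd _ _ fun d _ => pow_dvd_pow _ ?_
  have h := div_add_div_le (a := k) (b := m - k) (e := d)
  rwa [Nat.add_sub_cancel' hk] at h

lemma qBinomP_mul {k m : ℕ} (hk : k ≤ m) :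
    qBinomP m k * (qFactP k * qFactP (m - k)) = qFactP m := by
  rw [qBinomP, if_pos hk]
  obtain ⟨c, hc⟩ := denom_dvd hk
  have hmo : (qFactP k * qFactP (m - k)).Monic := (qFactP_monic k).mul (qFactP_monic (m - k))
  rw [hc, mul_divByMonic_cancel_left c hmo, mul_comm]

lemma cyclo_prime {d : ℕ} (hd : 0 < d) : Prime (cyclotomic d ℤ) :=
  UniqueFactorizationMonoid.irreducible_iff_prime.mp (cyclotomic.irreducible hd)

lemma cyclo_not_dvd {d e : ℕ} (hd : 0 < d) (he : 0 < e) (hne : d ≠ e) :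
    ¬ cyclotomic d ℤ ∣ cyclotomic e ℤ := fun h =>
  hne (cyclotomic_injective
    (eq_of_monic_of_associated (cyclotomic.monic d ℤ) (cyclotomic.monic e ℤ)
      ((cyclotomic.irreducible hd).associated_of_dvd (cyclotomic.irreducible he) h)))

lemma cyclo_not_dvd_prod {d m : ℕ} (hd : 2 ≤ d) (f : ℕ → ℕ) :
    ¬ cyclotomic d ℤ ∣ ∏ e ∈ (Finset.Icc 2 m).erase d, cyclotomic e ℤ ^ (f e) := by
  intro h
  obtain ⟨e, he, hdvd⟩ := (Prime.dvd_finset_prod_iff (cyclo_prime (by omega)) _).mp h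
  have hed : e ≠ d := (Finset.mem_erase.mp he).1
  have he2 : 2 ≤ e := (Finset.mem_Icc.mp (Finset.mem_erase.mp he).2).1
  exact cyclo_not_dvd (by omega) (by omega) (Ne.symm hed)
    ((cyclo_prime (by omega : (0:ℕ) < d)).dvd_of_dvd_pow hdvd)

lemma cyclo_dvd_qBinomP {d m k : ℕ} (hd : 2 ≤ d) (hk : k ≤ m)
    (hcarry : k / d + (m - k) / d < m / d) :
    cyclotomic d ℤ ∣ qBinomP m k := by
  set Φ := cyclotomic d ℤ with hΦdef
  have hΦ : Prime Φ := cyclo_prime (by omega)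
  have hdm : d ≤ m := by
    by_contra h
    have h0 : m / d = 0 := Nat.div_eq_of_lt (by omega)
    rw [h0] at hcarry
    exact Nat.not_lt_zero _ hcarry
  have hmem : d ∈ Finset.Icc 2 m := Finset.mem_Icc.mpr ⟨hd, hdm⟩
  set u := ∏ e ∈ (Finset.Icc 2 m).erase d, cyclotomic e ℤ ^ (m / e) with hu
  set v := ∏ e ∈ (Finset.Icc 2 m).erase d,
      cyclotomic e ℤ ^ (k / e + (m - k) / e) with hv
  have hnum : qFactP m = Φ ^ (m / d) * u := by
    rw [qFactP_eq_prod, ← Finset.mul_prod_erase _ _ hmem]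
  set b := k / d + (m - k) / d with hb
  have hden : qFactP k * qFactP (m - k) = Φ ^ b * v := by
    rw [denom_eq hk, ← Finset.mul_prod_erase _ _ hmem]
  have hpow : Φ ^ b * Φ ^ (m / d - b) = Φ ^ (m / d) := by
    rw [← pow_add]
    congr 1
    omega
  have key : Φ ^ b * (qBinomP m k * v) = Φ ^ b * (Φ ^ (m / d - b) * u) := by
    calc Φ ^ b * (qBinomP m k * v) = qBinomP m k * (Φ ^ b * v) := by ring
      _ = qFactP m := by rw [← hden, qBinomP_mul hk]
      _ = Φ ^ (m / d) * u := hnum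
      _ = Φ ^ b * (Φ ^ (m / d - b) * u) := by rw [← hpow]; ring
  have hcancel : qBinomP m k * v = Φ ^ (m / d - b) * u :=
    mul_left_cancel₀ (pow_ne_zero b hΦ.ne_zero) key
  have hdvd : Φ ∣ qBinomP m k * v := by
    rw [hcancel]
    exact Dvd.dvd.mul_right (dvd_pow_self Φ (by omega : m / d - b ≠ 0)) u
  rcases hΦ.dvd_mul.mp hdvd with h | h
  · exact h
  · exact absurd h (cyclo_not_dvd_prod hd _)

lemma cyclo_dvd_qIntP {d a : ℕ} (hd : d ≠ 1) (hdvd : d ∣ a) (ha : 0 < a) :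
    cyclotomic d ℤ ∣ qIntP a := by
  rw [qIntP_eq_prod ha]
  exact Finset.dvd_prod_of_mem _
    (Finset.mem_erase.mpr ⟨hd, Nat.mem_divisors.mpr ⟨hdvd, ha.ne'⟩⟩)

lemma cyclo_dvd_comp_sq {d : ℕ} (hd : 2 ≤ d) {f : Polynomial ℤ}
    (h : cyclotomic (if 2 ∣ d then d / 2 else d) ℤ ∣ f) :
    cyclotomic d ℤ ∣ f.comp (Polynomial.X ^ 2) := by
  rw [← expand_eq_comp_X_pow]
  refine dvd_trans ?_ (map_dvd (expand ℤ 2) h)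
  by_cases h2 : 2 ∣ d
  · rw [if_pos h2]
    have hdd : d / 2 * 2 = d := Nat.div_mul_cancel h2
    by_cases h4 : 2 ∣ d / 2
    · rw [cyclotomic_expand_eq_cyclotomic Nat.prime_two h4, hdd]
    · rw [cyclotomic_expand_eq_cyclotomic_mul Nat.prime_two h4, hdd]
      exact dvd_mul_right _ _
  · rw [if_neg h2, cyclotomic_expand_eq_cyclotomic_mul Nat.prime_two h2]
    exact dvd_mul_left _ _

lemma carry_lemma {e a b : ℕ} (he : 0 < e) (hab : e ≤ a % e + b % e) :
    a / e + b / e < (a + b) / e := by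
  have h1 : e * (a / e) + a % e = a := Nat.div_add_mod a e
  have h2 : e * (b / e) + b % e = b := Nat.div_add_mod b e
  have h3 : (a / e + b / e + 1) * e ≤ a + b := by
    have hexp : (a / e + b / e + 1) * e = e * (a / e) + e * (b / e) + e := by ring
    rw [hexp]
    linarith
  exact Nat.lt_of_succ_le ((Nat.le_div_iff_mul_le he).mpr h3)

lemma mod_sum_ge {e a b : ℕ} (he : 0 < e) (hdvd : e ∣ a + b) (ha : ¬ e ∣ a) :
    e ≤ a % e + b % e := by
  have h5 : (a % e + b % e) % e = 0 := by
    rw [← Nat.add_mod]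
    obtain ⟨t, ht⟩ := hdvd
    rw [ht, Nat.mul_mod_right]
  have hpos : 0 < a % e := Nat.pos_of_ne_zero fun h => ha (Nat.dvd_of_mod_eq_zero h)
  exact Nat.le_of_dvd (by omega) (Nat.dvd_of_mod_eq_zero h5)

lemma pred_mod {d n : ℕ} (hd : 2 ≤ d) (hn : 0 < n) (hdn : d ∣ n) :
    (n - 1) % d = d - 1 := by
  have hmod : n % d = 0 := by
    obtain ⟨t, rfl⟩ := hdn
    exact Nat.mul_mod_right d t
  have hs : (n - 1) % d < d := Nat.mod_lt _ (by omega)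
  have h1 : ((n - 1) + 1) % d = ((n - 1) % d + 1 % d) % d := Nat.add_mod _ _ _
  rw [Nat.sub_add_cancel hn, hmod, Nat.mod_eq_of_lt (by omega : 1 < d)] at h1
  have hdvd : d ∣ (n - 1) % d + 1 := Nat.dvd_of_mod_eq_zero h1.symm
  have hle : d ≤ (n - 1) % d + 1 := Nat.le_of_dvd (by omega) hdvd
  omega

end QTrjAux

open QTrjAux in
/-- For `r ≥ 1`, `j ≥ 1` and `n ≥ 2r−j` with `1 ≤ r ≤ n`, the q-integer `[n]_q`
divides `[j]_q·[n choose r]_{q²}·[2n+j−1−2r choose n−1]_q` in `ℤ[q]`;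
equivalently `T_r^{(j)}(n,q) = q^{r²−r}·[n choose r]_{q²}·[2n+j−1−2r choose n−1]_q·[j]_q/[n]_q`
is a polynomial for `n ≥ 2r−j`. -/
theorem qIntP_dvd_Trj (n r j : ℕ) (hr : 1 ≤ r) (hj : 1 ≤ j) (hrn : r ≤ n)
    (hnrj : 2 * (r : ℤ) - (j : ℤ) ≤ (n : ℤ)) :
    qIntP n ∣ qIntP j * qBinomP2 n r * qBinomP (2 * n + j - 1 - 2 * r) (n - 1) := by
  have hn : 0 < n := le_trans hr hrn
  have h2r : 2 * r ≤ n + j := by omega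
  set M := 2 * n + j - 1 - 2 * r with hM
  set P := qIntP j * qBinomP2 n r * qBinomP M (n - 1) with hP
  have hMk : n - 1 ≤ M := by omega
  have key : ∀ d ∈ n.divisors.erase 1, cyclotomic d ℤ ∣ P := by
    intro d hd
    rw [Finset.mem_erase, Nat.mem_divisors] at hd
    obtain ⟨hd1, hdn, -⟩ := hd
    have hd0 : 0 < d := Nat.pos_of_dvd_of_pos hdn hn
    have hd2 : 2 ≤ d := by omega
    by_cases hdj : d ∣ j
    · exact Dvd.dvd.mul_right (Dvd.dvd.mul_right (cyclo_dvd_qIntP hd1 hdj hj) _) _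
    · set e := if 2 ∣ d then d / 2 else d with he
      have hed : e ∣ d := by
        rw [he]; split
        · exact Nat.div_dvd_of_dvd ‹2 ∣ d›
        · exact dvd_rfl
      have he0 : 0 < e := by
        rw [he]; split <;> omega
      have hen : e ∣ n := hed.trans hdn
      have hd2r : e ∣ r → d ∣ 2 * r := by
        intro her
        rw [he] at her
        by_cases h2d : 2 ∣ d
        · rw [if_pos h2d] at her
          obtain ⟨t, ht⟩ := her
          have hdd : d / 2 * 2 = d := Nat.div_mul_cancel h2d
          refine ⟨t, ?_⟩
          rw [ht, show 2 * (d / 2 * t) = d / 2 * 2 * t by ring, hdd]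
        · rw [if_neg h2d] at her
          exact Dvd.dvd.mul_left her 2
      by_cases her : e ∣ r
      · -- carry in the big q-binomial at level d
        refine Dvd.dvd.mul_left ?_ _
        apply cyclo_dvd_qBinomP hd2 hMk
        -- need (n-1)/d + (M-(n-1))/d < M/d
        set b := M - (n - 1) with hbdef
        have hb : b = n + j - 2 * r := by omega
        have hndb : ¬ d ∣ b := by
          intro hdb
          apply hdj
          have h1 : d ∣ b + 2 * r := Nat.dvd_add hdb (hd2r her)
          have h2 : b + 2 * r = n + j := by omega
          rw [h2] at h1
          have := Nat.dvd_sub h1 hdn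
          simpa [Nat.add_sub_cancel_left] using this
        have hmod1 : (n - 1) % d = d - 1 := pred_mod hd2 hn hdn
        have hmod2 : 0 < b % d :=
          Nat.pos_of_ne_zero fun h => hndb (Nat.dvd_of_mod_eq_zero h)
        have hcarry := carry_lemma (a := n - 1) (b := b) (by omega : 0 < d) (by omega)
        have hsum : n - 1 + b = M := by omega
        rw [hsum] at hcarry
        exact hcarry
      · -- carry in the q²-binomial at level e
        have he2 : 2 ≤ e := by
          by_contra h
          have he1 : e = 1 := by omega
          exact her (he1 ▸ one_dvd r)
        have hrln : r < n := by
          rcases Nat.lt_or_ge r n with h | h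
          · exact h
          · exfalso; apply her
            have : r = n := by omega
            rw [this]; exact hen
        have hcarry : r / e + (n - r) / e < n / e := by
          have h := carry_lemma (a := r) (b := n - r) (by omega : 0 < e)
            (mod_sum_ge (by omega) (by rwa [Nat.add_sub_cancel' hrn]) her)
          rwa [Nat.add_sub_cancel' hrn] at h
        have hΦe : cyclotomic e ℤ ∣ qBinomP n r := cyclo_dvd_qBinomP he2 hrn hcarry
        have hcomp : cyclotomic d ℤ ∣ (qBinomP n r).comp (Polynomial.X ^ 2) :=
          cyclo_dvd_comp_sq hd2 (by rw [← he]; exact hΦe)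
        rw [hP]
        exact Dvd.dvd.mul_right (Dvd.dvd.mul_left hcomp _) _
  -- assemble: pass to ℚ[X] where distinct cyclotomics are coprime
  have hmonic : (qIntP n).Monic := by
    rw [qIntP_eq_prod hn]
    exact monic_prod_of_monic _ _ fun d _ => cyclotomic.monic d ℤ
  rw [← Polynomial.map_dvd_map (Int.castRingHom ℚ) Int.cast_injective hmonic]
  have hmap : (qIntP n).map (Int.castRingHom ℚ)
      = ∏ d ∈ n.divisors.erase 1, cyclotomic d ℚ := by
    rw [qIntP_eq_prod hn, Polynomial.map_prod]
    exact Finset.prod_congr rfl fun d _ => map_cyclotomic_int d ℚ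
  rw [hmap]
  apply Finset.prod_dvd_of_coprime
  · intro a ha b hb hab
    exact cyclotomic.isCoprime_rat hab
  · intro d hd
    have h := Polynomial.map_dvd (Int.castRingHom ℚ) (key d hd)
    rwa [map_cyclotomic_int] at h
end

section
/- Let n, r, j be positive integers, and set d = gcd(n, r) and m = gcd(n, 2r−j) (interpreting gcd with |2r−j|, and gcd(n,0) = n). Then the product [2d]_q · [m]_q divides [2n]_q · [j]_q in the polynomial ring ℤ[q]. -/
open Polynomial

lemma qIntP_eq_prod {a : ℕ} (ha : 0 < a) :
    qIntP a = ∏ i ∈ a.divisors.erase 1, Polynomial.cyclotomic i ℤ :=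
  (Polynomial.prod_cyclotomic_eq_geom_sum ha ℤ).symm

/-- Let `n, r, j` be positive integers, `d = gcd(n, r)` and `m = gcd(n, 2r−j)`
(the gcd being that of `n` and `|2r−j|`, with `gcd(n,0) = n`). Then
`[2d]_q·[m]_q` divides `[2n]_q·[j]_q` in `ℤ[q]`. -/
theorem qIntP_gcd_dvd (n r j : ℕ) (hn : 0 < n) (hr : 0 < r) (hj : 0 < j) :
    qIntP (2 * Nat.gcd n r) * qIntP (Int.gcd (n : ℤ) (2 * (r : ℤ) - (j : ℤ))) ∣
      qIntP (2 * n) * qIntP j := by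
  set d := Nat.gcd n r with hdDef
  set m := Int.gcd (n : ℤ) (2 * (r : ℤ) - (j : ℤ)) with hmDef
  have hd : 0 < d := Nat.gcd_pos_of_pos_left _ hn
  have hm : 0 < m := Int.gcd_pos_of_ne_zero_left _ (by exact_mod_cast hn.ne')
  have h2n : 0 < 2 * n := by positivity
  -- m ∣ n
  have hmn : m ∣ n := by
    have h : (m : ℤ) ∣ (n : ℤ) := Int.gcd_dvd_left _ _
    exact_mod_cast h
  set A := (2 * d).divisors.erase 1 with hA
  set B := m.divisors.erase 1 with hB
  set C := (2 * n).divisors.erase 1 with hC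
  set D := j.divisors.erase 1 with hD
  have hAC : A ⊆ C :=
    Finset.erase_subset_erase _ (Nat.divisors_subset_of_dvd h2n.ne'
      (mul_dvd_mul_left 2 (Nat.gcd_dvd_left n r)))
  have hBC : B ⊆ C :=
    Finset.erase_subset_erase _ (Nat.divisors_subset_of_dvd h2n.ne'
      (hmn.trans (dvd_mul_left n 2)))
  have hunion : A ∪ B ⊆ C ∪ D := by
    intro k hk
    rcases Finset.mem_union.1 hk with h | h
    · exact Finset.mem_union_left _ (hAC h)
    · exact Finset.mem_union_left _ (hBC h)
  have hinter : A ∩ B ⊆ C ∩ D := by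
    intro k hk
    rcases Finset.mem_inter.1 hk with ⟨hkA, hkB⟩
    have hk1 : k ≠ 1 := (Finset.mem_erase.1 hkA).1
    have hk2d : k ∣ 2 * d := (Nat.mem_divisors.1 (Finset.mem_erase.1 hkA).2).1
    have hkm : k ∣ m := (Nat.mem_divisors.1 (Finset.mem_erase.1 hkB).2).1
    have hk2r : (k : ℤ) ∣ 2 * (r : ℤ) := by
      have : k ∣ 2 * r := hk2d.trans (mul_dvd_mul_left 2 (Nat.gcd_dvd_right n r))
      exact_mod_cast this
    have hkdiff : (k : ℤ) ∣ 2 * (r : ℤ) - (j : ℤ) :=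
      (Int.natCast_dvd_natCast.2 hkm).trans (Int.gcd_dvd_right _ _)
    have hkj : k ∣ j := by
      have : (k : ℤ) ∣ (j : ℤ) := by
        have := dvd_sub hk2r hkdiff
        simpa using this
      exact_mod_cast this
    have hk2n : k ∣ 2 * n := hk2d.trans (mul_dvd_mul_left 2 (Nat.gcd_dvd_left n r))
    exact Finset.mem_inter.2 ⟨Finset.mem_erase.2 ⟨hk1, Nat.mem_divisors.2 ⟨hk2n, h2n.ne'⟩⟩,
      Finset.mem_erase.2 ⟨hk1, Nat.mem_divisors.2 ⟨hkj, hj.ne'⟩⟩⟩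
  rw [qIntP_eq_prod (by positivity), qIntP_eq_prod hm, qIntP_eq_prod h2n, qIntP_eq_prod hj,
    ← Finset.prod_union_inter, ← Finset.prod_union_inter (s₁ := C)]
  exact mul_dvd_mul (Finset.prod_dvd_prod_of_subset _ _ _ hunion)
    (Finset.prod_dvd_prod_of_subset _ _ _ hinter)
end
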